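/- Let X be a nonnegative random variable bounded by M > 0 and let X_1,...,X_n be i.i.d. copies of X. Then for any β > 0, P{|(1/n)∑ X_i − E[X]| > (β/2)(α + (1/n)∑ X_i + E[X])} ≤ M/(β^2 α n), for every α > 0. -/

import Mathlib

open MeasureTheory ProbabilityTheory

/-- Chebyshev-type relative deviation bound for bounded nonnegative i.i.d. random variables:
for `0 ≤ Xᵢ ≤ M` i.i.d. and any `α, β > 0`,
`P{|(1/n) ∑ Xᵢ - E[X]| > (β/2)(α + (1/n) ∑ Xᵢ + E[X])} ≤ M/(β² α n)`. -/
theorem bounded_iid_relative_deviation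
    {Ω : Type*} [MeasurableSpace Ω] (μ : Measure Ω) [IsProbabilityMeasure μ]
    (n : ℕ) (hn : 0 < n) (X : Fin n → Ω → ℝ) (M : ℝ) (hM : 0 < M)
    (hmeas : ∀ i, Measurable (X i))
    (hbound : ∀ i, ∀ ω, 0 ≤ X i ω ∧ X i ω ≤ M)
    (hindep : iIndepFun X μ)
    (hident : ∀ i, μ.map (X i) = μ.map (X ⟨0, hn⟩))
    (α β : ℝ) (hα : 0 < α) (hβ : 0 < β) :
    μ {ω | (β / 2) * (α + (1 / (n : ℝ)) * ∑ i, X i ω + ∫ ω', X ⟨0, hn⟩ ω' ∂μ) <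
        |(1 / (n : ℝ)) * ∑ i, X i ω - ∫ ω', X ⟨0, hn⟩ ω' ∂μ|} ≤
      ENNReal.ofReal (M / (β ^ 2 * α * n)) := by
  set m : ℝ := ∫ ω', X ⟨0, hn⟩ ω' ∂μ with hm
  have hnR : (0:ℝ) < (n:ℝ) := by exact_mod_cast hn
  -- all integrals coincide
  have hInt : ∀ i, ∫ ω, X i ω ∂μ = m := by
    intro i
    have h1 : ∫ ω, X i ω ∂μ = ∫ x, x ∂(μ.map (X i)) :=
      (integral_map (hmeas i).aemeasurable aestronglyMeasurable_id).symm
    have h2 : ∫ x, x ∂(μ.map (X ⟨0, hn⟩)) = m :=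
      integral_map (hmeas _).aemeasurable aestronglyMeasurable_id
    rw [h1, hident i, h2]
  have hm0 : 0 ≤ m := integral_nonneg fun ω => (hbound _ ω).1
  have hL2 : ∀ i, MemLp (X i) 2 μ := fun i =>
    memLp_of_bounded (ae_of_all _ fun ω => ⟨(hbound i ω).1, (hbound i ω).2⟩)
      (hmeas i).aestronglyMeasurable 2
  have hInt1 : ∀ i, Integrable (X i) μ := fun i => (hL2 i).integrable one_le_two
  rcases eq_or_lt_of_le hm0 with hme | hmpos
  · -- m = 0 : each X i is a.e. zero, event is a.e. empty
    have hZ : ∀ i, (fun ω => X i ω) =ᵐ[μ] 0 := by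
      intro i
      have : ∫ ω, X i ω ∂μ = 0 := by rw [hInt i, ← hme]
      exact (integral_eq_zero_iff_of_nonneg (fun ω => (hbound i ω).1) (hInt1 i)).1 this
    have hall : ∀ᵐ ω ∂μ, ∀ i, X i ω = 0 := by
      rw [ae_all_iff]; intro i; exact hZ i
    have hnull : μ {ω | ¬ ∀ i, X i ω = 0} = 0 := ae_iff.mp hall
    have hsub : {ω | (β / 2) * (α + (1 / (n : ℝ)) * ∑ i, X i ω + m) <
        |(1 / (n : ℝ)) * ∑ i, X i ω - m|} ⊆ {ω | ¬ ∀ i, X i ω = 0} := by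
      intro ω hω
      simp only [Set.mem_setOf_eq] at hω ⊢
      intro hz
      have hs : (∑ i, X i ω) = 0 := Finset.sum_eq_zero fun i _ => hz i
      rw [hs, ← hme] at hω
      simp at hω
      nlinarith
    calc μ _ ≤ μ {ω | ¬ ∀ i, X i ω = 0} := measure_mono hsub
      _ = 0 := hnull
      _ ≤ _ := zero_le
  · -- m > 0
    set t : ℝ := β * Real.sqrt (α * m) with htdef
    have ht : 0 < t := mul_pos hβ (Real.sqrt_pos.2 (mul_pos hα hmpos))
    set Y : Ω → ℝ := fun ω => (1 / (n : ℝ)) * ∑ i, X i ω with hY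
    have hYL2 : MemLp Y 2 μ := by
      have : MemLp (∑ i, X i) 2 μ := memLp_finset_sum' _ fun i _ => hL2 i
      simpa [hY, Finset.sum_apply] using this.const_mul (1 / (n : ℝ))
    have hEY : μ[Y] = m := by
      rw [hY]
      rw [integral_const_mul, integral_finset_sum _ fun i _ => hInt1 i]
      simp [hInt, Finset.sum_const, Finset.card_univ]
      field_simp
    have hsub : {ω | (β / 2) * (α + Y ω + m) < |Y ω - m|} ⊆ {ω | t ≤ |Y ω - μ[Y]|} := by
      intro ω hω
      simp only [Set.mem_setOf_eq] at hω ⊢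
      rw [hEY]
      have hY0 : 0 ≤ Y ω := by
        apply mul_nonneg (by positivity)
        exact Finset.sum_nonneg fun i _ => (hbound i ω).1
      have hAM : 2 * Real.sqrt (α * m) ≤ α + m := by
        nlinarith [Real.sq_sqrt (mul_pos hα hmpos).le, Real.sqrt_nonneg (α * m),
          sq_nonneg (Real.sqrt α - Real.sqrt m), sq_nonneg (α - m)]
      have : t ≤ (β / 2) * (α + Y ω + m) := by
        rw [htdef]
        nlinarith [Real.sqrt_nonneg (α * m)]
      linarith [hω]
    calc μ {ω | (β / 2) * (α + Y ω + m) < |Y ω - m|}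
        ≤ μ {ω | t ≤ |Y ω - μ[Y]|} := measure_mono hsub
      _ ≤ ENNReal.ofReal (variance Y μ / t ^ 2) := meas_ge_le_variance_div_sq hYL2 ht
      _ ≤ ENNReal.ofReal (M / (β ^ 2 * α * n)) := by
          apply ENNReal.ofReal_le_ofReal
          have hvari : ∀ i, variance (X i) μ ≤ M * m := by
            intro i
            have h := variance_le_sub_mul_sub
              (ae_of_all μ fun ω => (⟨(hbound i ω).1, (hbound i ω).2⟩ :
                X i ω ∈ Set.Icc 0 M)) (hmeas i).aemeasurable
            rw [hInt i] at h
            nlinarith [variance_nonneg (X i) μ]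
          have hfun : (∑ i, X i) = fun ω => ∑ i, X i ω := by
            funext ω; simp
          have hvarS : variance (fun ω => ∑ i, X i ω) μ ≤ (n : ℝ) * (M * m) := by
            rw [← hfun, IndepFun.variance_sum (fun i _ => hL2 i)
              (fun i _ j _ hij => hindep.indepFun hij)]
            calc (∑ i : Fin n, variance (X i) μ) ≤ ∑ _i : Fin n, (M * m) :=
                  Finset.sum_le_sum fun i _ => hvari i
              _ = (n : ℝ) * (M * m) := by simp [Finset.sum_const, Finset.card_univ, nsmul_eq_mul]
          have hvarY : variance Y μ ≤ M * m / n := by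
            have heq : variance Y μ = (1 / (n : ℝ)) ^ 2 * variance (fun ω => ∑ i, X i ω) μ := by
              have := variance_const_mul (1 / (n : ℝ)) (fun ω => ∑ i, X i ω) μ
              simpa [hY] using this
            rw [heq]
            rw [div_eq_mul_inv]
            calc (1 / (n : ℝ)) ^ 2 * variance (fun ω => ∑ i, X i ω) μ
                ≤ (1 / (n : ℝ)) ^ 2 * ((n : ℝ) * (M * m)) := by
                  apply mul_le_mul_of_nonneg_left hvarS (by positivity)
              _ = M * m * (n : ℝ)⁻¹ := by field_simp
          have ht2 : t ^ 2 = β ^ 2 * (α * m) := by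
            rw [htdef, mul_pow, Real.sq_sqrt (mul_pos hα hmpos).le]
          rw [ht2]
          rw [div_le_div_iff₀ (by positivity) (by positivity)]
          calc variance Y μ * (β ^ 2 * α * ↑n) ≤ (M * m / n) * (β ^ 2 * α * n) := by
                apply mul_le_mul_of_nonneg_right hvarY (by positivity)
            _ = M * (β ^ 2 * (α * m)) := by field_simp
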